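/- arXiv:2210.17241 — 2 statements merged into one kernel-verified Lean document; each statement's English description precedes it below -/
import Mathlib

section
/- Let f : ℝ^n → ℝ be differentiable with m-strongly monotone gradient and M-Lipschitz gradient, where 0 < m ≤ M. Then for all x, y: ⟨∇f(x) - ∇f(y), x - y⟩ ≥ (mM/(m+M))·‖x-y‖² + (1/(m+M))·‖∇f(x) - ∇f(y)‖². -/
open RealInnerProductSpace

section Aux

variable {E : Type*} [NormedAddCommGroup E] [InnerProductSpace ℝ E] [CompleteSpace E]

private lemma line_hasDerivAt (h : E → ℝ) (G : E → E) (hg : ∀ z, HasGradientAt h (G z) z)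
    (x y : E) (t : ℝ) :
    HasDerivAt (fun s : ℝ => h (x + s • (y - x))) ⟪G (x + t • (y - x)), y - x⟫ t := by
  have hc : HasDerivAt (fun s : ℝ => x + s • (y - x)) (y - x) t := by
    simpa using ((hasDerivAt_id t).smul_const (y - x)).const_add x
  have := (hg (x + t • (y - x))).hasFDerivAt.comp_hasDerivAt t hc
  simpa [InnerProductSpace.toDual_apply_apply, Function.comp_def] using this

private lemma grad_lower (h : E → ℝ) (G : E → E) (hg : ∀ z, HasGradientAt h (G z) z)
    (hmono : ∀ a b : E, 0 ≤ ⟪G a - G b, a - b⟫) (x y : E) :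
    h x + ⟪G x, y - x⟫ ≤ h y := by
  set ψ : ℝ → ℝ := fun t => h (x + t • (y - x)) - t * ⟪G x, y - x⟫ with hψ
  have hd : ∀ t : ℝ, HasDerivAt ψ ⟪G (x + t • (y - x)) - G x, y - x⟫ t := by
    intro t
    have := (line_hasDerivAt h G hg x y t).sub (hasDerivAt_mul_const ⟪G x, y - x⟫)
    simpa [inner_sub_left, Pi.sub_def] using this
  have hmonoOn : MonotoneOn ψ (Set.Icc 0 1) := by
    apply monotoneOn_of_hasDerivWithinAt_nonneg (convex_Icc 0 1)
      (fun t _ => (hd t).continuousAt.continuousWithinAt)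
      (fun t _ => (hd t).hasDerivWithinAt)
    intro t ht
    rw [interior_Icc] at ht
    have h1 := hmono (x + t • (y - x)) x
    have h2 : (x + t • (y - x)) - x = t • (y - x) := by abel
    rw [h2, real_inner_smul_right] at h1
    exact nonneg_of_mul_nonneg_right h1 ht.1
  have := hmonoOn (Set.mem_Icc.2 ⟨le_refl 0, zero_le_one⟩)
    (Set.mem_Icc.2 ⟨zero_le_one, le_refl 1⟩) zero_le_one
  simp only [hψ, zero_smul, one_smul, add_zero, zero_mul, sub_zero] at this
  have hy : x + (y - x) = y := by abel
  rw [hy] at this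
  linarith

private lemma grad_upper (h : E → ℝ) (G : E → E) (hg : ∀ z, HasGradientAt h (G z) z)
    (L : ℝ) (hub : ∀ a b : E, ⟪G a - G b, a - b⟫ ≤ L * ‖a - b‖ ^ 2) (x y : E) :
    h y ≤ h x + ⟪G x, y - x⟫ + L / 2 * ‖y - x‖ ^ 2 := by
  set ψ : ℝ → ℝ := fun t =>
    h (x + t • (y - x)) - t * ⟪G x, y - x⟫ - L / 2 * t ^ 2 * ‖y - x‖ ^ 2 with hψ
  have hd : ∀ t : ℝ,
      HasDerivAt ψ (⟪G (x + t • (y - x)) - G x, y - x⟫ - L * t * ‖y - x‖ ^ 2) t := by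
    intro t
    have h1 := (line_hasDerivAt h G hg x y t).sub (hasDerivAt_mul_const ⟪G x, y - x⟫)
    have h2 : HasDerivAt (fun t : ℝ => L / 2 * t ^ 2 * ‖y - x‖ ^ 2)
        (L * t * ‖y - x‖ ^ 2) t := by
      have := ((hasDerivAt_pow 2 t).const_mul (L / 2)).mul_const (‖y - x‖ ^ 2)
      refine this.congr_deriv ?_
      ring
    have := h1.sub h2
    simpa [inner_sub_left, Pi.sub_def] using this
  have hanti : AntitoneOn ψ (Set.Icc 0 1) := by
    apply antitoneOn_of_hasDerivWithinAt_nonpos (convex_Icc 0 1)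
      (fun t _ => (hd t).continuousAt.continuousWithinAt)
      (fun t _ => (hd t).hasDerivWithinAt)
    intro t ht
    rw [interior_Icc] at ht
    have h1 := hub (x + t • (y - x)) x
    have h2 : (x + t • (y - x)) - x = t • (y - x) := by abel
    rw [h2, real_inner_smul_right, norm_smul] at h1
    have ht0 : (0:ℝ) < t := ht.1
    have habs : |t| = t := abs_of_pos ht0
    rw [Real.norm_eq_abs, habs] at h1
    have key : t * (⟪G (x + t • (y - x)) - G x, y - x⟫ - L * t * ‖y - x‖ ^ 2) ≤ 0 := by
      nlinarith [h1]
    nlinarith [key, ht0]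
  have := hanti (Set.mem_Icc.2 ⟨le_refl 0, zero_le_one⟩)
    (Set.mem_Icc.2 ⟨zero_le_one, le_refl 1⟩) zero_le_one
  simp only [hψ, zero_smul, one_smul, add_zero, zero_mul, sub_zero, one_pow, mul_one] at this
  have hy : x + (y - x) = y := by abel
  rw [hy] at this
  linarith

private lemma baillon_haddad (h : E → ℝ) (G : E → E) (hg : ∀ z, HasGradientAt h (G z) z)
    (L : ℝ) (hL : 0 < L) (hmono : ∀ a b : E, 0 ≤ ⟪G a - G b, a - b⟫)
    (hub : ∀ a b : E, ⟪G a - G b, a - b⟫ ≤ L * ‖a - b‖ ^ 2) (x y : E) :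
    (1 / L) * ‖G x - G y‖ ^ 2 ≤ ⟪G x - G y, x - y⟫ := by
  have key : ∀ x y : E, h x + ⟪G x, y - x⟫ + (1 / (2 * L)) * ‖G y - G x‖ ^ 2 ≤ h y := by
    intro x y
    set d : E := G y - G x with hd
    set z : E := y - (1 / L) • d with hz
    have hA := grad_lower h G hg hmono x z
    have hB := grad_upper h G hg L hub y z
    have hzx : z - x = (y - x) - (1 / L) • d := by rw [hz]; abel
    have hzy : z - y = -((1 / L) • d) := by rw [hz]; abel
    have e1 : ⟪G x, z - x⟫ = ⟪G x, y - x⟫ - (1 / L) * ⟪G x, d⟫ := by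
      rw [hzx, inner_sub_right, real_inner_smul_right]
    have e2 : ⟪G y, z - y⟫ = -((1 / L) * ⟪G y, d⟫) := by
      rw [hzy, inner_neg_right, real_inner_smul_right]
    have e3 : ‖z - y‖ ^ 2 = (1 / L) ^ 2 * ‖d‖ ^ 2 := by
      rw [hzy, norm_neg, norm_smul, Real.norm_eq_abs,
        abs_of_pos (by positivity : (0:ℝ) < 1 / L)]
      ring
    have e4 : ⟪G y, d⟫ - ⟪G x, d⟫ = ‖d‖ ^ 2 := by
      rw [← inner_sub_left, ← hd, real_inner_self_eq_norm_sq]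
    rw [e1] at hA
    rw [e2, e3] at hB
    have expand : (1 / L) * (⟪G y, d⟫ - ⟪G x, d⟫) - L / 2 * ((1 / L) ^ 2 * ‖d‖ ^ 2)
        = (1 / (2 * L)) * ‖d‖ ^ 2 := by
      rw [e4]; field_simp; ring
    linarith [hA, hB, expand]
  have k1 := key x y
  have k2 := key y x
  have e5 : ⟪G x - G y, x - y⟫ = -(⟪G x, y - x⟫ + ⟪G y, x - y⟫) := by
    simp only [inner_sub_left, inner_sub_right]
    ring
  have e6 : ‖G y - G x‖ = ‖G x - G y‖ := norm_sub_rev _ _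
  have e7 : ‖G x - G y‖ = ‖G y - G x‖ := norm_sub_rev _ _
  rw [e6] at k1
  rw [e7] at k2
  rw [e6] at k2
  have hL' : (0:ℝ) < 1 / (2 * L) := by positivity
  have : 1 / L = 2 * (1 / (2 * L)) := by field_simp
  rw [this, e5]
  linarith

end Aux

theorem cocoercivity (n : ℕ) (f : EuclideanSpace ℝ (Fin n) → ℝ)
    (g : EuclideanSpace ℝ (Fin n) → EuclideanSpace ℝ (Fin n))
    (hg : ∀ x, HasGradientAt f (g x) x)
    (m M : ℝ) (hm : 0 < m) (hmM : m ≤ M)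
    (hstrong : ∀ x y, ⟪g x - g y, x - y⟫ ≥ m * ‖x - y‖ ^ 2)
    (hlip : ∀ x y, ‖g x - g y‖ ≤ M * ‖x - y‖) :
    ∀ x y, ⟪g x - g y, x - y⟫ ≥
      (m * M / (m + M)) * ‖x - y‖ ^ 2 + (1 / (m + M)) * ‖g x - g y‖ ^ 2 := by
  intro x y
  have hmM0 : (0:ℝ) < m + M := by linarith
  rcases eq_or_lt_of_le hmM with heq | hlt
  · -- m = M
    subst heq
    have h1 := hstrong x y
    have h2 := hlip x y
    have h3 : ‖g x - g y‖ ^ 2 ≤ m ^ 2 * ‖x - y‖ ^ 2 := by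
      nlinarith [norm_nonneg (g x - g y), norm_nonneg (x - y)]
    rw [ge_iff_le, div_mul_eq_mul_div, one_div, inv_mul_eq_div, ← add_div,
      div_le_iff₀ hmM0]
    nlinarith [h1, h3]
  · -- m < M
    set L := M - m with hL
    have hLpos : (0:ℝ) < L := by simp [hL]; linarith
    set G : EuclideanSpace ℝ (Fin n) → EuclideanSpace ℝ (Fin n) := fun z => g z - m • z with hG
    set h : EuclideanSpace ℝ (Fin n) → ℝ := fun z => f z - m / 2 * ‖z‖ ^ 2 with hh
    have hgrad : ∀ z, HasGradientAt h (G z) z := by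
      intro z
      have h1 : HasFDerivAt (fun w : EuclideanSpace ℝ (Fin n) => ‖w‖ ^ 2)
          (2 • (innerSL ℝ z)) z := by
        simpa using (hasFDerivAt_id z).norm_sq
      have h2 := h1.const_mul (m / 2)
      have h3 := (hg z).hasFDerivAt.sub h2
      rw [hasGradientAt_iff_hasFDerivAt]
      refine HasFDerivAt.congr_fderiv h3 ?_
      ext w
      simp only [hG, ContinuousLinearMap.sub_apply, ContinuousLinearMap.smul_apply,
        InnerProductSpace.toDual_apply_apply, innerSL_apply_apply, smul_eq_mul]
      rw [inner_sub_left, real_inner_smul_left]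
      ring
    have Gsub : ∀ a b : EuclideanSpace ℝ (Fin n), G a - G b = (g a - g b) - m • (a - b) := by
      intro a b
      simp only [hG, smul_sub]
      abel
    have hmono : ∀ a b, 0 ≤ ⟪G a - G b, a - b⟫ := by
      intro a b
      rw [Gsub, inner_sub_left, real_inner_smul_left, real_inner_self_eq_norm_sq]
      have := hstrong a b
      linarith
    have hub : ∀ a b, ⟪G a - G b, a - b⟫ ≤ L * ‖a - b‖ ^ 2 := by
      intro a b
      rw [Gsub, inner_sub_left, real_inner_smul_left, real_inner_self_eq_norm_sq]
      have h1 := real_inner_le_norm (g a - g b) (a - b)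
      have h2 := hlip a b
      have h3 : ⟪g a - g b, a - b⟫ ≤ M * ‖a - b‖ ^ 2 := by
        nlinarith [norm_nonneg (a - b)]
      simp only [hL]
      nlinarith
    have hbh := baillon_haddad h G hgrad L hLpos hmono hub x y
    rw [Gsub, inner_sub_left, real_inner_smul_left, real_inner_self_eq_norm_sq] at hbh
    have hnorm : ‖(g x - g y) - m • (x - y)‖ ^ 2 =
        ‖g x - g y‖ ^ 2 - 2 * m * ⟪g x - g y, x - y⟫ + m ^ 2 * ‖x - y‖ ^ 2 := by
      rw [@norm_sub_sq_real, real_inner_smul_right, norm_smul]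
      simp [abs_of_pos hm]
      ring
    rw [hnorm] at hbh
    have h1 := hstrong x y
    rw [ge_iff_le, div_mul_eq_mul_div, one_div, inv_mul_eq_div, ← add_div,
      div_le_iff₀ hmM0]
    have hL1 : 1 / L > 0 := by positivity
    have key : L * (⟪g x - g y, x - y⟫ - m * ‖x - y‖ ^ 2) ≥
        ‖g x - g y‖ ^ 2 - 2 * m * ⟪g x - g y, x - y⟫ + m ^ 2 * ‖x - y‖ ^ 2 := by
      have hLne : L ≠ 0 := ne_of_gt hLpos
      have h5 := mul_le_mul_of_nonneg_left hbh (le_of_lt hLpos)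
      rw [← mul_assoc, mul_one_div, div_self hLne, one_mul] at h5
      linarith
    simp only [hL] at key
    nlinarith [key]
end

section
/- Let Ω = diag(q₁,…,q_n) with 0 < q_min ≤ q_i ≤ 1, and let w, w^∞ ∈ ℝ^n be fixed vectors satisfying ‖Pw - w‖² + 2⟨w - w^∞, Pw - w⟩ ≤ -θ‖w - w^∞‖² for some θ ∈ (0,1) and matrix P. Let Ω^k be a random 0-1 diagonal matrix with E[Ω^k] = Ω. Then E[‖w + Ω^k(Pw - w) - w^∞‖²_{Ω^{-1}}] ≤ (1 - q_min·θ)·‖w - w^∞‖²_{Ω^{-1}}. -/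
open MeasureTheory

theorem randomized_weight_contraction
    {Ω : Type*} [MeasurableSpace Ω] (μ : Measure Ω) [IsProbabilityMeasure μ]
    (n : ℕ) (q : Fin n → ℝ) (qmin theta : ℝ) (P : Matrix (Fin n) (Fin n) ℝ)
    (w winf : Fin n → ℝ)
    (hqmin : 0 < qmin) (hq : ∀ i, qmin ≤ q i ∧ q i ≤ 1)
    (htheta : 0 < theta ∧ theta < 1)
    (hineq : (∑ i, (P.mulVec w i - w i) ^ 2)
        + 2 * ∑ i, (w i - winf i) * (P.mulVec w i - w i)
        ≤ -theta * ∑ i, (w i - winf i) ^ 2)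
    (eps : Fin n → Ω → ℝ)
    (h01 : ∀ i ω, eps i ω = 0 ∨ eps i ω = 1)
    (hint : ∀ i, Integrable (eps i) μ)
    (hmean : ∀ i, ∫ ω, eps i ω ∂μ = q i) :
    ∫ ω, ∑ i, (w i + eps i ω * (P.mulVec w i - w i) - winf i) ^ 2 / q i ∂μ
      ≤ (1 - qmin * theta) * ∑ i, (w i - winf i) ^ 2 / q i := by
  have hq0 : ∀ i, (0:ℝ) < q i := fun i => lt_of_lt_of_le hqmin (hq i).1
  set a : Fin n → ℝ := fun i => w i - winf i with ha
  set d : Fin n → ℝ := fun i => P.mulVec w i - w i with hd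
  have key : ∀ i ω, (w i + eps i ω * (P.mulVec w i - w i) - winf i) ^ 2 / q i
      = a i ^ 2 / q i + eps i ω * ((2 * a i * d i + d i ^ 2) / q i) := by
    intro i ω
    rcases h01 i ω with h | h <;> simp only [h, ha, hd] <;> ring
  have heq : ∀ i, (fun ω => (w i + eps i ω * (P.mulVec w i - w i) - winf i) ^ 2 / q i)
      = fun ω => a i ^ 2 / q i + eps i ω * ((2 * a i * d i + d i ^ 2) / q i) :=
    fun i => funext (key i)
  have hI : ∫ ω, ∑ i, (w i + eps i ω * (P.mulVec w i - w i) - winf i) ^ 2 / q i ∂μ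
      = ∑ i, (a i ^ 2 / q i + q i * ((2 * a i * d i + d i ^ 2) / q i)) := by
    rw [integral_finset_sum]
    · refine Finset.sum_congr rfl fun i _ => ?_
      rw [heq i, integral_add (integrable_const _) ((hint i).mul_const _),
          integral_const]
      rw [show (fun ω => eps i ω * ((2 * a i * d i + d i ^ 2) / q i)) = fun ω => ((2 * a i * d i + d i ^ 2) / q i) • eps i ω from funext fun ω => by simp [mul_comm],
          integral_smul, hmean i]
      simp [mul_comm]
    · intro i _
      rw [heq i]
      exact (integrable_const _).add ((hint i).mul_const _)
  rw [hI]
  have hcancel : ∀ i, q i * ((2 * a i * d i + d i ^ 2) / q i) = 2 * a i * d i + d i ^ 2 :=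
    fun i => mul_div_cancel₀ _ (hq0 i).ne'
  simp_rw [hcancel]
  rw [Finset.sum_add_distrib]
  have h1 : ∑ i, (2 * a i * d i + d i ^ 2) ≤ -theta * ∑ i, a i ^ 2 := by
    have : ∑ i, (2 * a i * d i + d i ^ 2)
        = (∑ i, d i ^ 2) + 2 * ∑ i, a i * d i := by
      rw [Finset.sum_add_distrib, Finset.mul_sum, add_comm]
      congr 1
      exact Finset.sum_congr rfl fun i _ => by ring
    rw [this]; exact hineq
  have h2 : qmin * ∑ i, a i ^ 2 / q i ≤ ∑ i, a i ^ 2 := by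
    rw [Finset.mul_sum]
    refine Finset.sum_le_sum fun i _ => ?_
    rw [mul_div_assoc']
    rw [div_le_iff₀ (hq0 i)]
    have := (hq i).1
    nlinarith [sq_nonneg (a i)]
  have h3 : -theta * ∑ i, a i ^ 2 ≤ -theta * (qmin * ∑ i, a i ^ 2 / q i) := by
    have := htheta.1
    nlinarith
  nlinarith [h1, h3]
end
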